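/- The function mapping a labeled set S (containing a fixed nonempty base set L) to the total coverage value Σ_{x ∈ U} (M − θ_{S}(x)) is submodular: for L ⊆ A ⊆ B and a point p ∉ B, the marginal gain of adding p to A is at least the marginal gain of adding p to B, i.e., Σ_{x∈U}(θ_A(x) − θ_{A∪{p}}(x)) ≥ Σ_{x∈U}(θ_B(x) − θ_{B∪{p}}(x)). -/

import Mathlib

/-- Submodularity of total coverage: for `L ⊆ A ⊆ B` and `p ∉ B`, the marginal
gain of adding `p` to `A` is at least the marginal gain of adding `p` to `B`:
`∑_{x∈U} (θ_A x - θ_{A∪{p}} x) ≥ ∑_{x∈U} (θ_B x - θ_{B∪{p}} x)`. -/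
theorem stmt_10 (d : ℕ) (hd : 0 < d) (L A B U : Finset (Fin d → ℝ))
    (hL : L.Nonempty) (hLA : L ⊆ A) (hAB : A ⊆ B)
    (p : Fin d → ℝ) (hp : p ∉ B) (M : ℝ) :
    ∑ x ∈ U, (B.inf' (hL.mono (hLA.trans hAB)) (fun z => ∑ i, |x i - z i|) -
        (insert p B).inf' (Finset.insert_nonempty p B) (fun z => ∑ i, |x i - z i|)) ≤
      ∑ x ∈ U, (A.inf' (hL.mono hLA) (fun z => ∑ i, |x i - z i|) -
        (insert p A).inf' (Finset.insert_nonempty p A) (fun z => ∑ i, |x i - z i|)) := by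
  apply Finset.sum_le_sum
  intro x _
  rw [Finset.inf'_insert (H := hL.mono (hLA.trans hAB)), Finset.inf'_insert (H := hL.mono hLA)]
  set f : (Fin d → ℝ) → ℝ := fun z => ∑ i, |x i - z i|
  have hAB' : A.inf' (hL.mono hLA) f ≥ B.inf' (hL.mono (hLA.trans hAB)) f :=
    Finset.inf'_mono f hAB _
  set a := A.inf' (hL.mono hLA) f
  set b := B.inf' (hL.mono (hLA.trans hAB)) f
  rcases le_total (f p) b with h | h
  · rw [min_eq_left h, min_eq_left (h.trans hAB')]
    linarith
  · rw [min_eq_right h]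
    rcases le_total (f p) a with h2 | h2
    · rw [min_eq_left h2]; linarith
    · rw [min_eq_right h2]; linarith
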